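/- Let q ≥ 2 and n ≥ 2 be integers, and let a₁, a₂, …, aₙ be integers with a₂ ≥ a₃ ≥ … ≥ aₙ ≥ 0. If (q^{2n−2} − 1)·a₁ ≤ (q − 1) · ∑_{i=2}^{n} (q^{i−2} − q^{2n−1−i})·aᵢ, then (q + 1)·a₁ + (q − 1)·a₂ ≤ 0. -/

import Mathlib

/-- Inclusion `C_hw ⊆ C_pHa` for SO(2n+1) (discussion after Proposition 7.2):
if `a₂ ≥ a₃ ≥ … ≥ aₙ ≥ 0` and `(q^{2n−2}−1)a₁ ≤ (q−1)∑_{i=2}^{n}(q^{i−2}−q^{2n−1−i})aᵢ`,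
then `(q+1)a₁ + (q−1)a₂ ≤ 0`. -/
theorem stmt11 (q : ℤ) (hq : 2 ≤ q) (n : ℕ) (hn : 2 ≤ n) (a : ℕ → ℤ)
    (hmono : ∀ i, 2 ≤ i → i < n → a (i + 1) ≤ a i)
    (hlast : 0 ≤ a n)
    (h : (q ^ (2 * n - 2) - 1) * a 1 ≤
        (q - 1) * ∑ i ∈ Finset.Icc 2 n, (q ^ (i - 2) - q ^ (2 * n - 1 - i)) * a i) :
    (q + 1) * a 1 + (q - 1) * a 2 ≤ 0 := by
  have hq1 : (1:ℤ) ≤ q := by linarith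
  -- nonnegativity of a i for 2 ≤ i ≤ n
  have pos : ∀ d i, i + d = n → 2 ≤ i → 0 ≤ a i := by
    intro d
    induction d with
    | zero =>
      intro i hi _
      have hin : i = n := by omega
      rw [hin]; exact hlast
    | succ k ih =>
      intro i hi h2
      have h1 := hmono i h2 (by omega)
      have h3 := ih (i + 1) (by omega) (by omega)
      linarith
  have ha2 : 0 ≤ a 2 := pos (n - 2) 2 (by omega) le_rfl
  -- split the sum
  have hsplit : Finset.Icc 2 n = insert 2 (Finset.Icc 3 n) := by
    ext x; simp [Finset.mem_Icc, Finset.mem_insert]; omega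
  rw [hsplit, Finset.sum_insert (by simp [Finset.mem_Icc])] at h
  have htail : ∑ i ∈ Finset.Icc 3 n, (q ^ (i - 2) - q ^ (2 * n - 1 - i)) * a i ≤ 0 := by
    apply Finset.sum_nonpos
    intro i hi
    rw [Finset.mem_Icc] at hi
    have hc : q ^ (i - 2) ≤ q ^ (2 * n - 1 - i) := pow_le_pow_right₀ hq1 (by omega)
    exact mul_nonpos_of_nonpos_of_nonneg (by linarith)
      (pos (n - i) i (by omega) (by omega))
  have key : (q ^ (2 * n - 2) - 1) * a 1 ≤ (q - 1) * ((1 - q ^ (2 * n - 3)) * a 2) := by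
    have : (q - 1) * ((q ^ (2 - 2) - q ^ (2 * n - 1 - 2)) * a 2 +
        ∑ i ∈ Finset.Icc 3 n, (q ^ (i - 2) - q ^ (2 * n - 1 - i)) * a i) ≤
        (q - 1) * ((1 - q ^ (2 * n - 3)) * a 2) := by
      have h23 : (2 * n - 1 - 2) = 2 * n - 3 := by omega
      rw [h23]
      simp only [show (2-2:ℕ)=0 from rfl, pow_zero]
      have := mul_nonpos_of_nonneg_of_nonpos (show (0:ℤ) ≤ q - 1 by linarith) htail
      nlinarith
    linarith
  set P := q ^ (2 * n - 3) with hP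
  have hQ : q ^ (2 * n - 2) = q * P := by
    rw [hP, ← pow_succ']
    congr 1; omega
  have hPq : q ≤ P := by
    calc q = q ^ 1 := (pow_one q).symm
    _ ≤ P := pow_le_pow_right₀ hq1 (by omega)
  rw [hQ] at key
  have hA : 0 < q * P - 1 := by nlinarith
  have hmul := mul_le_mul_of_nonneg_left key (show (0:ℤ) ≤ q + 1 by linarith)
  nlinarith [mul_nonneg (mul_nonneg (show (0:ℤ) ≤ q - 1 by linarith) ha2) (show (0:ℤ) ≤ P - q by linarith),
    mul_pos hA (show (0:ℤ) < 1 by norm_num)]
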